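/- Let g = V dt² - V^{-1} dr² - r²(dθ² + sin²θ dφ²) with V = V(r) > 0, and suppose (T, X, R) = (sinh(ta) f, cosh(ta) f, h) with f = h√V/(ar) gives an isometric embedding of r^{-2}(V^{-1}dr² - V dt²) into (dR² + dX² - dT²)/R². Then the map ι(t, r, θ, φ) = (T, X, R sinθ sinφ, R sinθ cosφ, R cosθ) into ℝ^{4,1} with metric dT² - dX² - dX₂² - dX₃² - dX₄² satisfies ι*(η) = Ω² g with Ω = h(r)/r. -/
import Mathlib


open Real

/-- If `(T, X, R) = (sinh(ta) f, cosh(ta) f, h)` with `f = h√V/(ar)` isometrically embeds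
the 2-metric `r⁻²(V⁻¹dr² - V dt²)` into `(dR² + dX² - dT²)/R²`, then
`ι(t,r,θ,φ) = (T, X, R sinθ sinφ, R sinθ cosφ, R cosθ)` into `ℝ^{4,1}` satisfies
`ι*(η) = Ω² g` with `Ω = h(r)/r` and `g = V dt² - V⁻¹dr² - r²(dθ² + sin²θ dφ²)`. -/
theorem stmt_6 (a : ℝ) (V h f : ℝ → ℝ)
    (hf : ∀ r, f r = h r * Real.sqrt (V r) / (a * r))
    (hVpos : ∀ r, 0 < V r) (hhpos : ∀ r, 0 < h r)
    (hVd : Differentiable ℝ V) (hhd : Differentiable ℝ h)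
    -- hypothesis: the 2-dimensional isometric embedding condition into AdS₃
    (h2d : ∀ t r dt dr : ℝ, r ≠ 0 →
        (deriv h r * dr) ^ 2
          + (a * Real.sinh (t * a) * f r * dt + Real.cosh (t * a) * deriv f r * dr) ^ 2
          - (a * Real.cosh (t * a) * f r * dt + Real.sinh (t * a) * deriv f r * dr) ^ 2
        = (h r) ^ 2 / r ^ 2 * ((V r)⁻¹ * dr ^ 2 - V r * dt ^ 2)) :
    -- conclusion: the flat quadratic form η pulled back along ι equals Ω² g
    ∀ t r θ φ dt dr dθ dφ : ℝ, r ≠ 0 →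
      (a * Real.cosh (t * a) * f r * dt + Real.sinh (t * a) * deriv f r * dr) ^ 2
        - (a * Real.sinh (t * a) * f r * dt + Real.cosh (t * a) * deriv f r * dr) ^ 2
        - (deriv h r * Real.sin θ * Real.sin φ * dr + h r * Real.cos θ * Real.sin φ * dθ
            + h r * Real.sin θ * Real.cos φ * dφ) ^ 2
        - (deriv h r * Real.sin θ * Real.cos φ * dr + h r * Real.cos θ * Real.cos φ * dθ
            - h r * Real.sin θ * Real.sin φ * dφ) ^ 2
        - (deriv h r * Real.cos θ * dr - h r * Real.sin θ * dθ) ^ 2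
      = (h r / r) ^ 2 *
          (V r * dt ^ 2 - (V r)⁻¹ * dr ^ 2
            - r ^ 2 * (dθ ^ 2 + (Real.sin θ) ^ 2 * dφ ^ 2)) := by
  intro t r θ φ dt dr dθ dφ hr
  have key := h2d t r dt dr hr
  have hsθ := Real.sin_sq_add_cos_sq θ
  have hsφ := Real.sin_sq_add_cos_sq φ
  have hr2 : (h r / r) ^ 2 * r ^ 2 = (h r) ^ 2 := by field_simp
  linear_combination (-1) * key
    - ((deriv h r * dr * Real.sin θ + h r * Real.cos θ * dθ) ^ 2
        + (h r * Real.sin θ * dφ) ^ 2) * hsφ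
    - ((deriv h r * dr) ^ 2 + (h r * dθ) ^ 2) * hsθ
    + (dθ ^ 2 + Real.sin θ ^ 2 * dφ ^ 2) * hr2
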